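/- Let m be a positive natural number and s : Fin m → ℝ with s i ≥ Real.exp 2 for all i. Define, for a weight function w : Fin m → ℝ, N_S(w) as the minimum cardinality of a subset K ⊆ Fin m such that ∑_{i ∈ K} w i ≥ (2/3) · ∑_i w i. Then N_S(fun i => Real.log (s i)) ≥ N_S(fun i => Real.sqrt (s i)); that is, the Nakamoto coefficient for safety under the Logarithmic Stake Weight model is at least that under the Square Root Stake Weight model. -/

import Mathlib

open Finset

/-- `log x / √x` is antitone on `[e², ∞)`, stated multiplicatively. -/
lemma sqrt_log_key {x y : ℝ} (hy : Real.exp 2 ≤ y) (hxy : y ≤ x) :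
    Real.sqrt y * Real.log x ≤ Real.sqrt x * Real.log y := by
  have hy0 : (0:ℝ) < y := lt_of_lt_of_le (Real.exp_pos 2) hy
  have hx0 : (0:ℝ) < x := lt_of_lt_of_le hy0 hxy
  have hlogy : (2:ℝ) ≤ Real.log y := by
    rw [show (2:ℝ) = Real.log (Real.exp 2) by rw [Real.log_exp]]
    exact Real.log_le_log (Real.exp_pos 2) hy
  set r : ℝ := x / y with hr
  have hr1 : (1:ℝ) ≤ r := (one_le_div hy0).mpr hxy
  have hxyr : x = y * r := by rw [hr]; field_simp [hy0.ne']
  have hsqrtx : Real.sqrt x = Real.sqrt y * Real.sqrt r := by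
    rw [hxyr, Real.sqrt_mul hy0.le]
  have hlogx : Real.log x = Real.log y + Real.log r := by
    rw [hxyr, Real.log_mul hy0.ne' (by positivity)]
  have hsr1 : (1:ℝ) ≤ Real.sqrt r := by
    rw [show (1:ℝ) = Real.sqrt 1 by simp]
    exact Real.sqrt_le_sqrt hr1
  have hlr : Real.log (Real.sqrt r) ≤ Real.sqrt r - 1 :=
    Real.log_le_sub_one_of_pos (by positivity)
  have hlr2 : Real.log r = 2 * Real.log (Real.sqrt r) := by
    rw [Real.log_sqrt (by positivity)]; ring
  rw [hsqrtx, hlogx]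
  have hsy : (0:ℝ) ≤ Real.sqrt y := Real.sqrt_nonneg y
  nlinarith [mul_le_mul_of_nonneg_left
    (show Real.log y + Real.log r ≤ Real.sqrt r * Real.log y by nlinarith) hsy]

/-- The Nakamoto coefficient for safety of a weight function `w` on `m` validators:
the minimum cardinality of a subset of validators whose cumulative weight is at least
two-thirds of the total weight. -/
noncomputable def nakamotoSafety (m : ℕ) (w : Fin m → ℝ) : ℕ :=
  sInf {n : ℕ | ∃ K : Finset (Fin m), K.card = n ∧ (2 / 3 : ℝ) * ∑ i, w i ≤ ∑ i ∈ K, w i}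

/-- Theorem 2 (safety part): for stakes at least `e²`, the Nakamoto coefficient for
safety under the Logarithmic Stake Weight model is at least that under the
Square Root Stake Weight model. -/
theorem lsw_nakamoto_safety_ge_srsw (m : ℕ) (hm : 0 < m) (s : Fin m → ℝ)
    (hs : ∀ i, Real.exp 2 ≤ s i) :
    nakamotoSafety m (fun i => Real.sqrt (s i)) ≤
      nakamotoSafety m (fun i => Real.log (s i)) := by
  have hspos : ∀ i, (0:ℝ) < s i := fun i => lt_of_lt_of_le (Real.exp_pos 2) (hs i)
  have hlog2 : ∀ i, (2:ℝ) ≤ Real.log (s i) := fun i => by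
    rw [show (2:ℝ) = Real.log (Real.exp 2) by rw [Real.log_exp]]
    exact Real.log_le_log (Real.exp_pos 2) (hs i)
  have hsumlog_pos : (0:ℝ) < ∑ i, Real.log (s i) := by
    have : (0:ℝ) < ∑ _i : Fin m, (2:ℝ) := by
      simp [Finset.card_univ]; positivity
    calc (0:ℝ) < ∑ _i : Fin m, (2:ℝ) := this
      _ ≤ ∑ i, Real.log (s i) := Finset.sum_le_sum fun i _ => hlog2 i
  have hsumsqrt_nonneg : (0:ℝ) ≤ ∑ i, Real.sqrt (s i) :=
    Finset.sum_nonneg fun i _ => Real.sqrt_nonneg _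
  -- the log set is nonempty
  set Lset := {n : ℕ | ∃ K : Finset (Fin m),
      K.card = n ∧ (2 / 3 : ℝ) * ∑ i, Real.log (s i) ≤ ∑ i ∈ K, Real.log (s i)} with hL
  have hLne : Lset.Nonempty := by
    refine ⟨m, Finset.univ, by simp, ?_⟩
    nlinarith
  have hmemL : sInf Lset ∈ Lset := Nat.sInf_mem hLne
  obtain ⟨K, hKcard, hKquorum⟩ := hmemL
  set k := sInf Lset with hk
  -- K is nonempty
  have hKne : K.Nonempty := by
    rcases K.eq_empty_or_nonempty with h | h
    · exfalso; rw [h] at hKquorum; simp at hKquorum; nlinarith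
    · exact h
  have hkpos : 0 < k := by
    rw [← hKcard]; exact Finset.card_pos.mpr hKne
  have hkm : k ≤ m := by
    rw [← hKcard]; simpa using Finset.card_le_card (Finset.subset_univ K)
  -- sorting permutation
  set σ := Tuple.sort s with hσ
  have hmono : Monotone (s ∘ σ) := Tuple.monotone_sort s
  have hmk : m - k < m := by omega
  set a : Fin m := ⟨m - k, hmk⟩ with ha
  set T : Finset (Fin m) := (Finset.Ici a).image σ with hT
  have hmemT : ∀ i, i ∈ T ↔ a ≤ σ.symm i := by
    intro i
    simp only [hT, Finset.mem_image, Finset.mem_Ici]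
    constructor
    · rintro ⟨b, hb, rfl⟩; simpa using hb
    · intro h; exact ⟨σ.symm i, h, by simp⟩
  have hTcard : T.card = k := by
    rw [hT, Finset.card_image_of_injective _ σ.injective, Fin.card_Ici]
    simp [ha]; omega
  -- top property: every element of T has stake at least that of any element outside T
  have htop : ∀ i ∈ T, ∀ j ∉ T, s j ≤ s i := by
    intro i hi j hj
    rw [hmemT] at hi hj
    have hji : σ.symm j ≤ σ.symm i := le_trans (le_of_not_ge hj) hi
    have := hmono hji
    simpa using this
  -- sum over T of log dominates sum over K of log
  have hTK : ∑ i ∈ K, Real.log (s i) ≤ ∑ i ∈ T, Real.log (s i) := by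
    have hcardeq : (K \ T).card = (T \ K).card := by
      have h1 := Finset.card_inter_add_card_sdiff K T
      have h2 := Finset.card_inter_add_card_sdiff T K
      rw [Finset.inter_comm] at h2
      omega
    have hdiff : ∑ i ∈ K \ T, Real.log (s i) ≤ ∑ i ∈ T \ K, Real.log (s i) := by
      rcases (K \ T).eq_empty_or_nonempty with h | h
      · rw [h]; simp
        exact Finset.sum_nonneg fun i _ => le_trans (by norm_num) (hlog2 i)
      · have hBne : (T \ K).Nonempty := by
          rw [← Finset.card_pos, ← hcardeq, Finset.card_pos]; exact h
        obtain ⟨b0, hb0, hb0min⟩ := (T \ K).exists_min_image (fun i => Real.log (s i)) hBne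
        have hb0T : b0 ∈ T := (Finset.mem_sdiff.mp hb0).1
        have h1 : ∑ i ∈ K \ T, Real.log (s i) ≤ (K \ T).card • Real.log (s b0) := by
          apply Finset.sum_le_card_nsmul
          intro x hx
          have hxT : x ∉ T := (Finset.mem_sdiff.mp hx).2
          exact Real.log_le_log (hspos x) (htop b0 hb0T x hxT)
        have h2 : (T \ K).card • Real.log (s b0) ≤ ∑ i ∈ T \ K, Real.log (s i) :=
          Finset.card_nsmul_le_sum _ _ _ fun x hx => hb0min x hx
        rw [hcardeq] at h1
        exact le_trans h1 h2
    have e1 := Finset.sum_inter_add_sum_sdiff K T (fun i => Real.log (s i))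
    have e2 := Finset.sum_inter_add_sum_sdiff T K (fun i => Real.log (s i))
    rw [Finset.inter_comm] at e2
    linarith
  have hTquorum : (2 / 3 : ℝ) * ∑ i, Real.log (s i) ≤ ∑ i ∈ T, Real.log (s i) :=
    le_trans hKquorum hTK
  -- cross product inequality
  have hcross : (∑ i ∈ T, Real.log (s i)) * (∑ i, Real.sqrt (s i)) ≤
      (∑ i ∈ T, Real.sqrt (s i)) * (∑ i, Real.log (s i)) := by
    have hsplit1 : ∑ i, Real.sqrt (s i)
        = ∑ i ∈ T, Real.sqrt (s i) + ∑ i ∈ Tᶜ, Real.sqrt (s i) :=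
      (Finset.sum_add_sum_compl T _).symm
    have hsplit2 : ∑ i, Real.log (s i)
        = ∑ i ∈ T, Real.log (s i) + ∑ i ∈ Tᶜ, Real.log (s i) :=
      (Finset.sum_add_sum_compl T _).symm
    rw [hsplit1, hsplit2]
    have key : (∑ i ∈ T, Real.log (s i)) * (∑ j ∈ Tᶜ, Real.sqrt (s j)) ≤
        (∑ i ∈ T, Real.sqrt (s i)) * (∑ j ∈ Tᶜ, Real.log (s j)) := by
      rw [Finset.sum_mul_sum, Finset.sum_mul_sum]
      apply Finset.sum_le_sum
      intro i hi
      apply Finset.sum_le_sum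
      intro j hj
      have hji : s j ≤ s i := htop i hi j (by simpa using hj)
      have := sqrt_log_key (hs j) hji
      nlinarith
    ring_nf
    nlinarith
  -- conclude quorum for sqrt with set T
  have hTsqrt : (2 / 3 : ℝ) * ∑ i, Real.sqrt (s i) ≤ ∑ i ∈ T, Real.sqrt (s i) := by
    have h1 : ((2 / 3 : ℝ) * ∑ i, Real.sqrt (s i)) * (∑ i, Real.log (s i)) ≤
        (∑ i ∈ T, Real.sqrt (s i)) * (∑ i, Real.log (s i)) := by
      calc ((2 / 3 : ℝ) * ∑ i, Real.sqrt (s i)) * (∑ i, Real.log (s i))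
          = ((2 / 3 : ℝ) * ∑ i, Real.log (s i)) * (∑ i, Real.sqrt (s i)) := by ring
        _ ≤ (∑ i ∈ T, Real.log (s i)) * (∑ i, Real.sqrt (s i)) :=
            mul_le_mul_of_nonneg_right hTquorum hsumsqrt_nonneg
        _ ≤ (∑ i ∈ T, Real.sqrt (s i)) * (∑ i, Real.log (s i)) := hcross
    exact le_of_mul_le_mul_right h1 hsumlog_pos
  exact Nat.sInf_le ⟨T, hTcard, hTsqrt⟩
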